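/- Let k ≥ 3 and N ≥ 1 be integers and r, s integers. Define for τ in the upper half-plane h_{k,N,r,s}(τ) = (1/2)·((k−1)!/(2πi)^k)·Σ_{(n_1,n_2) ∈ Z²∖{(0,0)}} exp(2πi(n_1 s − n_2 r)/N)/(n_1 + n_2 τ)^k, the sum being absolutely convergent. Then for every matrix γ = (a b; c d) ∈ SL_2(Z) and every τ in the upper half-plane, h_{k,N,r,s}((aτ+b)/(cτ+d)) = (cτ+d)^k · h_{k,N,rd+sb,rc+sa}(τ). -/

import Mathlib

/-- The change-of-variables bijection `(n₁,n₂) ↦ (n₁d+n₂b, n₁c+n₂a)` on `ℤ²∖{0}`. -/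
def slEquiv (a b c d : ℤ) (hdet : a * d - b * c = 1) :
    {p : ℤ × ℤ // p ≠ 0} ≃ {p : ℤ × ℤ // p ≠ 0} where
  toFun p := ⟨(p.1.1 * d + p.1.2 * b, p.1.1 * c + p.1.2 * a), by
    have hp := p.2
    simp only [ne_eq, Prod.ext_iff, Prod.fst_zero, Prod.snd_zero] at hp ⊢
    rintro ⟨h1, h2⟩
    exact hp ⟨by linear_combination a * h1 - b * h2 - p.1.1 * hdet,
              by linear_combination -c * h1 + d * h2 - p.1.2 * hdet⟩⟩
  invFun q := ⟨(q.1.1 * a - q.1.2 * b, -q.1.1 * c + q.1.2 * d), by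
    have hq := q.2
    simp only [ne_eq, Prod.ext_iff, Prod.fst_zero, Prod.snd_zero] at hq ⊢
    rintro ⟨h1, h2⟩
    exact hq ⟨by linear_combination d * h1 + b * h2 - q.1.1 * hdet,
              by linear_combination c * h1 + a * h2 - q.1.2 * hdet⟩⟩
  left_inv p := by
    ext
    · show (p.1.1 * d + p.1.2 * b) * a - (p.1.1 * c + p.1.2 * a) * b = p.1.1
      linear_combination p.1.1 * hdet
    · show -(p.1.1 * d + p.1.2 * b) * c + (p.1.1 * c + p.1.2 * a) * d = p.1.2
      linear_combination p.1.2 * hdet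
  right_inv q := by
    ext
    · show (q.1.1 * a - q.1.2 * b) * d + (-q.1.1 * c + q.1.2 * d) * b = q.1.1
      linear_combination q.1.1 * hdet
    · show (q.1.1 * a - q.1.2 * b) * c + (-q.1.1 * c + q.1.2 * d) * a = q.1.2
      linear_combination q.1.2 * hdet


/-- The Eisenstein series `h_{k,N,r,s}(τ)` for `Γ(N)`, defined by the lattice sum
`(1/2)((k-1)!/(2πi)^k) Σ_{(n₁,n₂)≠(0,0)} e^{2πi(n₁s - n₂r)/N}/(n₁+n₂τ)^k`. -/
noncomputable def eisensteinH (k N : ℕ) (r s : ℤ) (τ : ℂ) : ℂ :=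
  (1 / 2) * ((Nat.factorial (k - 1) : ℂ) / (2 * (Real.pi : ℂ) * Complex.I) ^ k) *
    ∑' p : {p : ℤ × ℤ // p ≠ 0},
      Complex.exp (2 * (Real.pi : ℂ) * Complex.I *
          ((p.1.1 : ℂ) * (s : ℂ) - (p.1.2 : ℂ) * (r : ℂ)) / (N : ℂ)) /
        ((p.1.1 : ℂ) + (p.1.2 : ℂ) * τ) ^ k

/-- The transformation law of `h_{k,N,r,s}` under the full modular group:
`h_{k,N,r,s}((aτ+b)/(cτ+d)) = (cτ+d)^k h_{k,N,rd+sb,rc+sa}(τ)`. -/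
theorem eisensteinH_modular_transformation (k N : ℕ) (hk : 3 ≤ k) (hN : 1 ≤ N)
    (r s : ℤ) (a b c d : ℤ) (hdet : a * d - b * c = 1) (τ : ℂ) (hτ : 0 < τ.im) :
    eisensteinH k N r s (((a : ℂ) * τ + (b : ℂ)) / ((c : ℂ) * τ + (d : ℂ))) =
      ((c : ℂ) * τ + (d : ℂ)) ^ k * eisensteinH k N (r * d + s * b) (r * c + s * a) τ := by
  set D : ℂ := (c : ℂ) * τ + (d : ℂ) with hDdef
  have hD : D ≠ 0 := by
    rcases eq_or_ne c 0 with rfl | hc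
    · have hd : d ≠ 0 := by rintro rfl; simp at hdet
      simp only [hDdef, Int.cast_zero, zero_mul, zero_add]
      exact_mod_cast hd
    · intro h
      have him : D.im = (c : ℝ) * τ.im := by
        simp [hDdef, Complex.add_im, Complex.mul_im]
      have hne : (c : ℝ) * τ.im ≠ 0 := mul_ne_zero (Int.cast_ne_zero.mpr hc) hτ.ne'
      rw [h] at him
      simp only [Complex.zero_im] at him
      exact hne him.symm
  have hdetC : (a : ℂ) * d - b * c = 1 := by exact_mod_cast hdet
  unfold eisensteinH
  rw [mul_left_comm]
  congr 1
  rw [← tsum_mul_left]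
  calc
    (∑' p : {p : ℤ × ℤ // p ≠ 0},
        Complex.exp (2 * (Real.pi : ℂ) * Complex.I *
            ((p.1.1 : ℂ) * (s : ℂ) - (p.1.2 : ℂ) * (r : ℂ)) / (N : ℂ)) /
          ((p.1.1 : ℂ) + (p.1.2 : ℂ) * (((a : ℂ) * τ + b) / D)) ^ k)
      = ∑' p : {p : ℤ × ℤ // p ≠ 0},
          (fun q : {p : ℤ × ℤ // p ≠ 0} =>
            D ^ k * (Complex.exp (2 * (Real.pi : ℂ) * Complex.I *
              ((q.1.1 : ℂ) * ((r * c + s * a : ℤ) : ℂ) -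
                (q.1.2 : ℂ) * ((r * d + s * b : ℤ) : ℂ)) / (N : ℂ)) /
              ((q.1.1 : ℂ) + (q.1.2 : ℂ) * τ) ^ k)) (slEquiv a b c d hdet p) := by
        refine tsum_congr fun p => ?_
        obtain ⟨⟨n₁, n₂⟩, hp⟩ := p
        simp only [slEquiv, Equiv.coe_fn_mk]
        set m₁ : ℤ := n₁ * d + n₂ * b
        set m₂ : ℤ := n₁ * c + n₂ * a
        have hexp : (n₁ : ℂ) * (s : ℂ) - (n₂ : ℂ) * (r : ℂ) =
            (m₁ : ℂ) * ((r * c + s * a : ℤ) : ℂ) - (m₂ : ℂ) * ((r * d + s * b : ℤ) : ℂ) := by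
          push_cast [m₁, m₂]
          linear_combination ((n₂ : ℂ) * r - (n₁ : ℂ) * s) * hdetC
        have hden : (n₁ : ℂ) + (n₂ : ℂ) * (((a : ℂ) * τ + b) / D) =
            ((m₁ : ℂ) + (m₂ : ℂ) * τ) / D := by
          field_simp [m₁, m₂]
          push_cast
          rw [hDdef]
          simp only [m₁, m₂]
          push_cast
          ring
        rw [hexp, hden, div_pow, div_div_eq_mul_div, mul_comm _ (D ^ k), mul_div_assoc]
    _ = _ := (slEquiv a b c d hdet).tsum_eq fun q : {p : ℤ × ℤ // p ≠ 0} =>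
            D ^ k * (Complex.exp (2 * (Real.pi : ℂ) * Complex.I *
              ((q.1.1 : ℂ) * ((r * c + s * a : ℤ) : ℂ) -
                (q.1.2 : ℂ) * ((r * d + s * b : ℤ) : ℂ)) / (N : ℂ)) /
              ((q.1.1 : ℂ) + (q.1.2 : ℂ) * τ) ^ k)
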